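/- For all n, m ∈ ℕ: ∫_{D_q} (U*)ⁿUᵐ = 1/[n+1]_q if n = m and 0 otherwise; explicitly, (1−q) Σ_{k=0}^∞ q^k ⟨e_k, (U*)ⁿUᵐ e_k⟩ equals (1−q)/(1−q^{n+1}) when n = m and vanishes when n ≠ m. -/

import Mathlib

open MeasureTheory InnerProductSpace

noncomputable section

/-- `H = ℓ²(ℕ, ℂ)`. -/
abbrev H : Type := lp (fun _ : ℕ => ℂ) 2

/-- The standard orthonormal basis `e n` of `ℓ²(ℕ, ℂ)`. -/
noncomputable def e (n : ℕ) : H := lp.single 2 n 1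

/-- The integral `∫_{D_q} a = (1−q) Σ_k q^k ⟨e_k, a e_k⟩`. -/
noncomputable def intDq (q : ℝ) (a : H →L[ℂ] H) : ℂ :=
  ((1 - q : ℝ) : ℂ) * ∑' k : ℕ, ((q : ℂ) ^ k) * (inner ℂ (e k) (a (e k)) : ℂ)

namespace Stmt11Aux

/-- The product `∏_{i<n} (1 - q^{k+i+1})`. -/
def P (q : ℝ) (n k : ℕ) : ℝ := ∏ i ∈ Finset.range n, (1 - q ^ (k + i + 1))

variable {q : ℝ}

lemma factor_nonneg (hq0 : 0 < q) (hq1 : q < 1) (m : ℕ) : 0 ≤ 1 - q ^ (m + 1) := by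
  have : q ^ (m + 1) ≤ 1 := pow_le_one₀ hq0.le hq1.le
  linarith

lemma P_nonneg (hq0 : 0 < q) (hq1 : q < 1) (n k : ℕ) : 0 ≤ P q n k :=
  Finset.prod_nonneg fun i _ => factor_nonneg hq0 hq1 _

lemma P_le_one (hq0 : 0 < q) (hq1 : q < 1) (n k : ℕ) : P q n k ≤ 1 :=
  Finset.prod_le_one (fun i _ => factor_nonneg hq0 hq1 _)
    (fun i _ => by nlinarith [pow_nonneg hq0.le (k + i + 1)])

lemma summable_qP (hq0 : 0 < q) (hq1 : q < 1) (n : ℕ) : Summable (fun k : ℕ => q ^ k * P q n k) := by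
  refine Summable.of_nonneg_of_le
    (fun k => mul_nonneg (pow_nonneg hq0.le _) (P_nonneg hq0 hq1 n k))
    (fun k => ?_) (summable_geometric_of_lt_one hq0.le hq1)
  calc q ^ k * P q n k ≤ q ^ k * 1 :=
        mul_le_mul_of_nonneg_left (P_le_one hq0 hq1 n k) (pow_nonneg hq0.le _)
    _ = q ^ k := mul_one _

lemma summable_q2P (hq0 : 0 < q) (hq1 : q < 1) (n : ℕ) :
    Summable (fun k : ℕ => (q ^ 2) ^ k * P q n k) := by
  have hq2 : q ^ 2 < 1 := by nlinarith
  refine Summable.of_nonneg_of_le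
    (fun k => mul_nonneg (pow_nonneg (by positivity) _) (P_nonneg hq0 hq1 n k))
    (fun k => ?_) (summable_geometric_of_lt_one (by positivity) hq2)
  calc (q ^ 2) ^ k * P q n k ≤ (q ^ 2) ^ k * 1 :=
        mul_le_mul_of_nonneg_left (P_le_one hq0 hq1 n k) (pow_nonneg (by positivity) _)
    _ = (q ^ 2) ^ k := mul_one _

/-- `S n = ∑_k q^k P n k`. -/
def S (q : ℝ) (n : ℕ) : ℝ := ∑' k : ℕ, q ^ k * P q n k

/-- `T n = ∑_k q^{2k} P n k`. -/
def T (q : ℝ) (n : ℕ) : ℝ := ∑' k : ℕ, (q ^ 2) ^ k * P q n k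

lemma hA (hq0 : 0 < q) (hq1 : q < 1) (n : ℕ) :
    S q (n + 1) = S q n - q ^ (n + 1) * T q n := by
  have h : ∀ k : ℕ, q ^ k * P q (n + 1) k
      = q ^ k * P q n k - q ^ (n + 1) * ((q ^ 2) ^ k * P q n k) := by
    intro k
    have hP : P q (n + 1) k = P q n k * (1 - q ^ (k + n + 1)) := by
      rw [P, Finset.prod_range_succ]; rfl
    have hpow : q ^ k * q ^ (k + n + 1) = q ^ (n + 1) * (q ^ 2) ^ k := by
      rw [← pow_add, ← pow_mul, ← pow_add]; ring_nf
    rw [hP]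
    linear_combination (-(P q n k)) * hpow
  rw [S, tsum_congr h,
    Summable.tsum_sub (summable_qP hq0 hq1 n) ((summable_q2P hq0 hq1 n).mul_left _),
    tsum_mul_left]
  rfl

lemma hB (hq0 : 0 < q) (hq1 : q < 1) (n : ℕ) : q * S q (n + 1) = S q n - T q n := by
  have h : ∀ k : ℕ, q * (q ^ k * P q (n + 1) k)
      = q ^ (k + 1) * P q n (k + 1) - (q ^ 2) ^ (k + 1) * P q n (k + 1) := by
    intro k
    have hsplit : P q (n + 1) k = (∏ i ∈ Finset.range n, (1 - q ^ (k + (i + 1) + 1)))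
        * (1 - q ^ (k + 0 + 1)) := Finset.prod_range_succ' _ _
    have hshift : P q n (k + 1) = ∏ i ∈ Finset.range n, (1 - q ^ (k + (i + 1) + 1)) := by
      apply Finset.prod_congr rfl; intro i _; ring_nf
    rw [hsplit, ← hshift]
    ring
  have key : q * S q (n + 1) = ∑' k : ℕ, (q ^ (k + 1) * P q n (k + 1)
      - (q ^ 2) ^ (k + 1) * P q n (k + 1)) := by
    rw [S, ← tsum_mul_left]
    exact tsum_congr h
  have h1 : Summable (fun k : ℕ => q ^ (k + 1) * P q n (k + 1)) :=
    ((summable_qP hq0 hq1 n).comp_injective (add_left_injective 1))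
  have h2 : Summable (fun k : ℕ => (q ^ 2) ^ (k + 1) * P q n (k + 1)) :=
    ((summable_q2P hq0 hq1 n).comp_injective (add_left_injective 1))
  rw [key, Summable.tsum_sub h1 h2]
  have e1 : S q n = q ^ 0 * P q n 0 + ∑' k : ℕ, q ^ (k + 1) * P q n (k + 1) :=
    Summable.tsum_eq_zero_add (summable_qP hq0 hq1 n)
  have e2 : T q n = (q ^ 2) ^ 0 * P q n 0 + ∑' k : ℕ, (q ^ 2) ^ (k + 1) * P q n (k + 1) :=
    Summable.tsum_eq_zero_add (summable_q2P hq0 hq1 n)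
  rw [e1, e2]; ring

lemma one_sub_pow_pos (hq0 : 0 < q) (hq1 : q < 1) (m : ℕ) : 0 < 1 - q ^ (m + 1) := by
  have : q ^ (m + 1) < 1 := pow_lt_one₀ hq0.le hq1 (Nat.succ_ne_zero m)
  linarith

lemma S_eq (hq0 : 0 < q) (hq1 : q < 1) (n : ℕ) : S q n = 1 / (1 - q ^ (n + 1)) := by
  induction n with
  | zero =>
    have : ∀ k : ℕ, q ^ k * P q 0 k = q ^ k := by
      intro k; simp [P]
    rw [S, tsum_congr this, tsum_geometric_of_lt_one hq0.le hq1]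
    rw [pow_one, one_div]
  | succ n ih =>
    have hAn := hA hq0 hq1 n
    have hBn := hB hq0 hq1 n
    have hpos1 : (0:ℝ) < 1 - q ^ (n + 1) := one_sub_pow_pos hq0 hq1 n
    have hpos2 : (0:ℝ) < 1 - q ^ (n + 2) := one_sub_pow_pos hq0 hq1 (n + 1)
    -- from the two relations: T n * (1 - q^(n+2)) = S n * (1 - q)
    have hq2 : q * q ^ (n + 1) = q ^ (n + 2) := by rw [← pow_succ']
    have hthis : q * (S q n - q ^ (n + 1) * T q n) = S q n - T q n := by
      rw [← hAn, hBn]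
    have hT : T q n * (1 - q ^ (n + 2)) = S q n * (1 - q) := by
      linear_combination hthis + T q n * hq2
    have hSn : S q n * (1 - q ^ (n + 1)) = 1 := by
      rw [ih]; field_simp
    have hfin : S q (n + 1) * (1 - q ^ (n + 2)) = 1 := by
      linear_combination (1 - q ^ (n + 2)) * hAn - q ^ (n + 1) * hT + hSn
    rw [eq_div_iff hpos2.ne']
    exact hfin

end Stmt11Aux

open Stmt11Aux

lemma inner_e (j l : ℕ) : (inner ℂ (e j) (e l) : ℂ) = if j = l then 1 else 0 := by
  rw [e, e, lp.inner_single_left]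
  rcases eq_or_ne j l with h | h
  · subst h; rw [lp.single_apply_self]; simp
  · rw [lp.single_apply_ne _ _ _ h]; simp [h]

lemma U_pow_apply (q : ℝ) (U : H →L[ℂ] H)
    (hU : ∀ n : ℕ, U (e n) = (Real.sqrt (1 - q ^ (n + 1)) : ℂ) • e (n + 1))
    (m k : ℕ) : (U ^ m) (e k)
      = ((∏ i ∈ Finset.range m, Real.sqrt (1 - q ^ (k + i + 1)) : ℝ) : ℂ) • e (k + m) := by
  induction m with
  | zero => simp
  | succ m ih =>
    rw [pow_succ', ContinuousLinearMap.mul_apply, ih, U.map_smul, hU (k + m), smul_smul,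
      Finset.prod_range_succ]
    congr 1
    push_cast
    ring

/-- `∫_{D_q} (U*)ⁿUᵐ = δ_{n,m} (1−q)/(1−q^{n+1}) = δ_{n,m}/[n+1]_q`. -/
theorem stmt11 (q : ℝ) (hq0 : 0 < q) (hq1 : q < 1)
    (U : H →L[ℂ] H)
    (hU : ∀ n : ℕ, U (e n) = (Real.sqrt (1 - q ^ (n + 1)) : ℂ) • e (n + 1))
    (n m : ℕ) :
    intDq q ((ContinuousLinearMap.adjoint U) ^ n * U ^ m)
      = if n = m then (((1 - q) / (1 - q ^ (n + 1)) : ℝ) : ℂ) else 0 := by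
  have hadj : (ContinuousLinearMap.adjoint U) ^ n = ContinuousLinearMap.adjoint (U ^ n) := by
    rw [← ContinuousLinearMap.star_eq_adjoint, ← star_pow, ContinuousLinearMap.star_eq_adjoint]
  have hinner : ∀ k : ℕ, (inner ℂ (e k) (((ContinuousLinearMap.adjoint U) ^ n * U ^ m) (e k)) : ℂ)
      = if n = m then ((P q n k : ℝ) : ℂ) else 0 := by
    intro k
    rw [ContinuousLinearMap.mul_apply, hadj, ContinuousLinearMap.adjoint_inner_right,
      U_pow_apply q U hU n k, U_pow_apply q U hU m k, inner_smul_left, inner_smul_right,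
      inner_e]
    rcases eq_or_ne n m with h | h
    · subst h
      rw [if_pos rfl, mul_one, Complex.conj_ofReal, ← Complex.ofReal_mul,
        ← Finset.prod_mul_distrib, if_pos rfl]
      have hsq : (∏ i ∈ Finset.range n, Real.sqrt (1 - q ^ (k + i + 1))
          * Real.sqrt (1 - q ^ (k + i + 1))) = P q n k :=
        Finset.prod_congr rfl fun i _ => Real.mul_self_sqrt (factor_nonneg hq0 hq1 _)
      rw [hsq]
    · have : k + n ≠ k + m := fun hc => h (by omega)
      simp [this, h]
  rw [intDq]
  have htsum : (∑' k : ℕ, ((q : ℂ) ^ k)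
      * (inner ℂ (e k) (((ContinuousLinearMap.adjoint U) ^ n * U ^ m) (e k)) : ℂ))
      = if n = m then ((S q n : ℝ) : ℂ) else 0 := by
    rcases eq_or_ne n m with h | h
    · simp only [if_pos h]
      rw [S, Complex.ofReal_tsum]
      apply tsum_congr
      intro k
      rw [hinner k, if_pos h]
      push_cast
      ring
    · simp only [if_neg h]
      have : ∀ k : ℕ, ((q : ℂ) ^ k)
          * (inner ℂ (e k) (((ContinuousLinearMap.adjoint U) ^ n * U ^ m) (e k)) : ℂ) = 0 := by
        intro k; rw [hinner k, if_neg h, mul_zero]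
      rw [tsum_congr this, tsum_zero]
  rw [htsum]
  rcases eq_or_ne n m with h | h
  · rw [if_pos h, if_pos h, S_eq hq0 hq1 n]
    push_cast
    ring
  · rw [if_neg h, if_neg h, mul_zero]

end
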